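/- Let 1 ≤ k ≤ n−1 be integers and let Γ and Γ' be signed graphs of order n. If Γ and Γ' are switching isomorphic, then their k-token signed graphs F_k(Γ) and F_k(Γ') are switching isomorphic. -/

import Mathlib

open scoped Classical

/-- A signed graph: a simple graph together with a signature assigning a sign `±1`
(an element of `ℤˣ`) to each pair of vertices (only the values on edges are relevant). -/
structure SignedGraph (V : Type*) where
  G : SimpleGraph V
  sign : V → V → ℤˣ
  sign_symm : ∀ u v, sign u v = sign v u

namespace SignedGraph

variable {V W : Type*}

/-- The sign function, as a function on unordered pairs. -/
def esign (Γ : SignedGraph V) : Sym2 V → ℤˣ :=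
  Sym2.lift ⟨Γ.sign, Γ.sign_symm⟩

/-- The sign of a walk: the product of the signs of its edges. -/
def walkSign (Γ : SignedGraph V) {u v : V} (p : Γ.G.Walk u v) : ℤˣ :=
  (p.edges.map Γ.esign).prod

/-- A signed graph is balanced if every cycle is positive. -/
def Balanced (Γ : SignedGraph V) : Prop :=
  ∀ ⦃u : V⦄ (p : Γ.G.Walk u u), p.IsCycle → Γ.walkSign p = 1

/-- Switching at a vertex subset `U`: reverse the sign of every edge with exactly one
endpoint in `U`. -/
noncomputable def switch (Γ : SignedGraph V) (U : Set V) : SignedGraph V where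
  G := Γ.G
  sign u v := (if u ∈ U then (-1 : ℤˣ) else 1) * (if v ∈ U then (-1 : ℤˣ) else 1) * Γ.sign u v
  sign_symm u v := by
    rw [Γ.sign_symm u v, mul_comm (if u ∈ U then (-1 : ℤˣ) else 1) (if v ∈ U then (-1 : ℤˣ) else 1)]

/-- Two signed graphs on the same vertex set are "the same signed graph" when they have the
same underlying graph and the same signature on every edge. -/
def SEq (Γ Γ' : SignedGraph V) : Prop :=
  Γ.G = Γ'.G ∧ ∀ u v, Γ.G.Adj u v → Γ.sign u v = Γ'.sign u v

/-- Switching equivalence of two signed graphs on the same vertex set. -/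
def SwitchEquiv (Γ Γ' : SignedGraph V) : Prop :=
  ∃ U : Set V, (Γ.switch U).SEq Γ'

/-- A sign-preserving isomorphism of signed graphs. -/
structure Iso (Γ : SignedGraph V) (Γ' : SignedGraph W) where
  toEquiv : V ≃ W
  adj_iff : ∀ u v, Γ.G.Adj u v ↔ Γ'.G.Adj (toEquiv u) (toEquiv v)
  sign_eq : ∀ u v, Γ.G.Adj u v → Γ.sign u v = Γ'.sign (toEquiv u) (toEquiv v)

/-- Switching isomorphism: `Γ'` is isomorphic to a switching of `Γ`. -/
def SwitchIso (Γ : SignedGraph V) (Γ' : SignedGraph W) : Prop :=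
  ∃ U : Set V, Nonempty ((Γ.switch U).Iso Γ')

/-- The negation of a signed graph: all edge signs reversed. -/
def neg (Γ : SignedGraph V) : SignedGraph V where
  G := Γ.G
  sign u v := -Γ.sign u v
  sign_symm u v := by rw [Γ.sign_symm]

variable [DecidableEq V]

/-- The underlying graph of the `k`-token graph: vertices are the `k`-subsets of `V`,
with `A ~ B` when `A Δ B = {a, b}`, `a ∈ A`, `b ∈ B` and `a ~ b` in `G`. -/
def tokenAdj (G : SimpleGraph V) (k : ℕ) : SimpleGraph {A : Finset V // A.card = k} where
  Adj A B := ∃ a b, a ∈ A.1 ∧ b ∈ B.1 ∧ G.Adj a b ∧ symmDiff A.1 B.1 = {a, b}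
  symm := by
    refine ⟨?_⟩
    rintro A B ⟨a, b, ha, hb, hab, hs⟩
    exact ⟨b, a, hb, ha, hab.symm, by rw [symmDiff_comm, hs, Finset.pair_comm]⟩
  loopless := by
    refine ⟨?_⟩
    rintro A ⟨a, b, ha, hb, hab, hs⟩
    rw [symmDiff_self] at hs
    have h : a ∈ ({a, b} : Finset V) := Finset.mem_insert_self a {b}
    rw [← hs] at h
    simp at h

/-- The `k`-token signed graph: the edge obtained by moving a token along `ab`
carries the sign of `ab`. -/
def token (Γ : SignedGraph V) (k : ℕ) : SignedGraph {A : Finset V // A.card = k} where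
  G := tokenAdj Γ.G k
  sign A B := ∏ a ∈ A.1 \ B.1, ∏ b ∈ B.1 \ A.1, Γ.sign a b
  sign_symm A B := by
    rw [Finset.prod_comm]
    exact Finset.prod_congr rfl fun b _ => Finset.prod_congr rfl fun a _ => Γ.sign_symm a b

/-- The signed adjacency matrix (over `ℝ`). -/
noncomputable def adjMatrix (Γ : SignedGraph V) [Fintype V] : Matrix V V ℝ :=
  Matrix.of fun u v => if Γ.G.Adj u v then ((Γ.sign u v : ℤ) : ℝ) else 0

/-- The signed Laplacian matrix `L = D - A` (over `ℝ`). -/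
noncomputable def lapMatrix (Γ : SignedGraph V) [Fintype V] : Matrix V V ℝ :=
  Matrix.diagonal (fun v => (Γ.G.degree v : ℝ)) - Γ.adjMatrix

/-- The quantity `ℓ_m(Γ)`. -/
noncomputable def ellm (Γ : SignedGraph V) [Fintype V] (m : ℕ) : ℝ :=
  (∑ r ∈ Finset.range (m + 1),
      ((Γ.G.adjMatrix ℝ ^ r).trace - (Γ.adjMatrix ^ r).trace)) /
  (∑ r ∈ Finset.range (m + 1),
      ((Γ.G.adjMatrix ℝ ^ r).trace + |(Γ.adjMatrix ^ r).trace|))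

/-- The unbalance level `ℓ(Γ) = max {ℓ_{n-1}(Γ), ℓ_n(Γ)}`. -/
noncomputable def unbalanceLevel (Γ : SignedGraph V) [Fintype V] : ℝ :=
  max (Γ.ellm (Fintype.card V - 1)) (Γ.ellm (Fintype.card V))

/-- The frustration index: the minimum number of negative edges whose deletion yields a
balanced signed graph. -/
noncomputable def frustrationIndex (Γ : SignedGraph V) : ℕ :=
  sInf {m : ℕ | ∃ F : Finset (Sym2 V), F.card = m ∧ ↑F ⊆ Γ.G.edgeSet ∧
    (∀ e ∈ F, Γ.esign e = -1) ∧
    Balanced ⟨Γ.G.deleteEdges ↑F, Γ.sign, Γ.sign_symm⟩}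

/-- The signed complement of a balanced signed graph, with respect to a switching function
`s` witnessing balance (`A_σ = S A S`): the signed graph on the complement graph with
adjacency matrix `S Ā S`, i.e. with sign `s u * s v` on each complement edge. -/
def scompl (Γ : SignedGraph V) (s : V → ℤˣ) : SignedGraph V where
  G := Γ.Gᶜ
  sign u v := s u * s v
  sign_symm u v := mul_comm _ _

/-- The real diagonal `±1` matrix associated with `s : V → ℤˣ`. -/
noncomputable def diagS [Fintype V] (s : V → ℤˣ) : Matrix V V ℝ :=
  Matrix.diagonal fun v => ((s v : ℤ) : ℝ)

end SignedGraph

/-- The all-positive signed complete graph on `V`. -/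
def allPos (V : Type*) : SignedGraph V := ⟨⊤, fun _ _ => 1, fun _ _ => rfl⟩

/-- The `(n; 1, k)`-binomial matrix. -/
noncomputable def binomB (V : Type*) [Fintype V] [DecidableEq V] (k : ℕ) :
    Matrix {A : Finset V // A.card = k} V ℝ :=
  Matrix.of fun A v => if v ∈ A.1 then 1 else 0

/-- The `(n; k₁, k₂)`-binomial matrix. -/
noncomputable def binomB2 (V : Type*) [Fintype V] [DecidableEq V] (k₁ k₂ : ℕ) :
    Matrix {A : Finset V // A.card = k₂} {A : Finset V // A.card = k₁} ℝ :=
  Matrix.of fun A X => if X.1 ⊆ A.1 then 1 else 0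


namespace SignedGraph

variable {V W : Type*} [DecidableEq V] [DecidableEq W]

private lemma sdiff_pair_aux {A B : Finset V} {a b : V}
    (ha : a ∈ A) (hb : b ∈ B) (hs : symmDiff A B = {a, b}) :
    A \ B = {a} ∧ B \ A = {b} := by
  have haB : a ∉ B := by
    intro hmem
    have h1 : a ∈ symmDiff A B := hs ▸ Finset.mem_insert_self a {b}
    rw [Finset.mem_symmDiff] at h1
    tauto
  have hbA : b ∉ A := by
    intro hmem
    have h1 : b ∈ symmDiff A B := hs ▸ Finset.mem_insert_of_mem (Finset.mem_singleton_self b)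
    rw [Finset.mem_symmDiff] at h1
    tauto
  constructor
  · ext x
    simp only [Finset.mem_sdiff, Finset.mem_singleton]
    constructor
    · rintro ⟨hxA, hxB⟩
      have h1 : x ∈ symmDiff A B := Finset.mem_symmDiff.2 (Or.inl ⟨hxA, hxB⟩)
      rw [hs] at h1
      rcases Finset.mem_insert.1 h1 with h2 | h2
      · exact h2
      · obtain rfl := Finset.mem_singleton.1 h2
        exact absurd hxA hbA
    · rintro rfl; exact ⟨ha, haB⟩
  · ext x
    simp only [Finset.mem_sdiff, Finset.mem_singleton]
    constructor
    · rintro ⟨hxB, hxA⟩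
      have h1 : x ∈ symmDiff A B := Finset.mem_symmDiff.2 (Or.inr ⟨hxB, hxA⟩)
      rw [hs] at h1
      rcases Finset.mem_insert.1 h1 with h2 | h2
      · obtain rfl := h2
        exact absurd hxB haB
      · exact Finset.mem_singleton.1 h2
    · rintro rfl; exact ⟨hb, hbA⟩

private lemma token_edge {G : SimpleGraph V} {k : ℕ} {A B : {A : Finset V // A.card = k}}
    (h : (tokenAdj G k).Adj A B) :
    ∃ a b, a ∈ A.1 ∧ b ∈ B.1 ∧ G.Adj a b ∧ A.1 \ B.1 = {a} ∧ B.1 \ A.1 = {b} := by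
  obtain ⟨a, b, ha, hb, hab, hs⟩ := h
  obtain ⟨h1, h2⟩ := sdiff_pair_aux ha hb hs
  exact ⟨a, b, ha, hb, hab, h1, h2⟩

/-- The equivalence on `k`-subsets induced by an equivalence on vertices. -/
def tokenEquiv (e : V ≃ W) (k : ℕ) :
    {A : Finset V // A.card = k} ≃ {A : Finset W // A.card = k} where
  toFun A := ⟨A.1.image e, by rw [Finset.card_image_of_injective _ e.injective, A.2]⟩
  invFun B := ⟨B.1.image e.symm, by rw [Finset.card_image_of_injective _ e.symm.injective, B.2]⟩
  left_inv A := Subtype.ext (by simp [Finset.image_image])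
  right_inv B := Subtype.ext (by simp [Finset.image_image])

private lemma tokenEquiv_symm_comp (e : V ≃ W) (k : ℕ) (A : {A : Finset V // A.card = k}) :
    tokenEquiv e.symm k (tokenEquiv e k A) = A :=
  Subtype.ext (by simp [tokenEquiv, Finset.image_image])

private lemma tokenAdj_map {G : SimpleGraph V} {G' : SimpleGraph W} {e : V ≃ W}
    (hadj : ∀ u v, G.Adj u v ↔ G'.Adj (e u) (e v)) {k : ℕ}
    {A B : {A : Finset V // A.card = k}} (h : (tokenAdj G k).Adj A B) :
    (tokenAdj G' k).Adj (tokenEquiv e k A) (tokenEquiv e k B) := by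
  obtain ⟨a, b, ha, hb, hab, hAB, hBA⟩ := token_edge h
  refine ⟨e a, e b, Finset.mem_image_of_mem _ ha, Finset.mem_image_of_mem _ hb,
    (hadj a b).1 hab, ?_⟩
  have h1 : (A.1.image e) \ (B.1.image e) = {e a} := by
    rw [← Finset.image_sdiff _ _ e.injective, hAB, Finset.image_singleton]
  have h2 : (B.1.image e) \ (A.1.image e) = {e b} := by
    rw [← Finset.image_sdiff _ _ e.injective, hBA, Finset.image_singleton]
  show symmDiff (A.1.image e) (B.1.image e) = {e a, e b}
  rw [symmDiff_def, Finset.sup_eq_union, h1, h2, ← Finset.insert_eq]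

private lemma prod_mul_prod_sdiff {A B : Finset V} {a b : V}
    (hAB : A \ B = {a}) (hBA : B \ A = {b}) (s : V → ℤˣ) :
    (∏ v ∈ A, s v) * ∏ v ∈ B, s v = s a * s b := by
  have h1 : (∏ v ∈ A \ (A ∩ B), s v) * ∏ v ∈ A ∩ B, s v = ∏ v ∈ A, s v :=
    Finset.prod_sdiff Finset.inter_subset_left
  have h2 : (∏ v ∈ B \ (B ∩ A), s v) * ∏ v ∈ B ∩ A, s v = ∏ v ∈ B, s v :=
    Finset.prod_sdiff Finset.inter_subset_left
  rw [Finset.sdiff_inter_self_left, hAB, Finset.prod_singleton] at h1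
  rw [Finset.sdiff_inter_self_left, hBA, Finset.prod_singleton] at h2
  rw [← h1, ← h2, Finset.inter_comm B A, mul_mul_mul_comm]
  have h3 : (∏ v ∈ A ∩ B, s v) * ∏ v ∈ A ∩ B, s v = 1 := by
    rw [← Finset.prod_mul_distrib]
    exact Finset.prod_eq_one fun v _ => Int.units_mul_self _
  rw [h3, mul_one]

end SignedGraph

/-- switching isomorphic signed graphs of order `n` have switching isomorphic
`k`-token signed graphs. -/
theorem switchIso_token {V W : Type*} [Fintype V] [Fintype W] [DecidableEq V] [DecidableEq W]
    (n k : ℕ) (hV : Fintype.card V = n) (hW : Fintype.card W = n)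
    (hk1 : 1 ≤ k) (hk2 : k ≤ n - 1)
    (Γ : SignedGraph V) (Γ' : SignedGraph W) (h : Γ.SwitchIso Γ') :
    (Γ.token k).SwitchIso (Γ'.token k) := by
  classical
  obtain ⟨U, ⟨φ⟩⟩ := h
  let e := φ.toEquiv
  obtain ⟨s, hs⟩ : ∃ s : V → ℤˣ, s = fun v => if v ∈ U then -1 else 1 := ⟨_, rfl⟩
  obtain ⟨Uk, hUk⟩ : ∃ Uk : Set {A : Finset V // A.card = k},
      Uk = {A | ∏ v ∈ A.1, s v = -1} := ⟨_, rfl⟩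
  have hadj : ∀ u v, Γ.G.Adj u v ↔ Γ'.G.Adj (e u) (e v) := φ.adj_iff
  have hind : ∀ X : {A : Finset V // A.card = k},
      (if X ∈ Uk then (-1 : ℤˣ) else 1) = ∏ v ∈ X.1, s v := by
    intro X
    by_cases hX : (∏ v ∈ X.1, s v) = -1
    · rw [if_pos (by rw [hUk]; exact hX), hX]
    · rw [if_neg (by rw [hUk]; exact hX), (Int.units_eq_one_or _).resolve_right hX]
  refine ⟨Uk, ⟨{ toEquiv := SignedGraph.tokenEquiv e k, adj_iff := ?_, sign_eq := ?_ }⟩⟩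
  · intro A B
    constructor
    · exact fun hAB => SignedGraph.tokenAdj_map hadj hAB
    · intro hAB
      have hadj' : ∀ u v, Γ'.G.Adj u v ↔ Γ.G.Adj (e.symm u) (e.symm v) := by
        intro u v
        rw [hadj (e.symm u) (e.symm v)]
        simp
      have h2 := SignedGraph.tokenAdj_map hadj' hAB
      rwa [SignedGraph.tokenEquiv_symm_comp, SignedGraph.tokenEquiv_symm_comp] at h2
  · intro A B hAB
    obtain ⟨a, b, ha, hb, hab, hABs, hBAs⟩ := SignedGraph.token_edge hAB
    have h1 : (A.1.image e) \ (B.1.image e) = {e a} := by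
      rw [← Finset.image_sdiff _ _ e.injective, hABs, Finset.image_singleton]
    have h2 : (B.1.image e) \ (A.1.image e) = {e b} := by
      rw [← Finset.image_sdiff _ _ e.injective, hBAs, Finset.image_singleton]
    have hR : (Γ'.token k).sign (SignedGraph.tokenEquiv e k A) (SignedGraph.tokenEquiv e k B)
        = Γ'.sign (e a) (e b) := by
      show (∏ x ∈ (A.1.image e) \ (B.1.image e), ∏ y ∈ (B.1.image e) \ (A.1.image e),
          Γ'.sign x y) = Γ'.sign (e a) (e b)
      rw [h1, h2, Finset.prod_singleton, Finset.prod_singleton]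
    have hL : ((Γ.token k).switch Uk).sign A B
        = (if A ∈ Uk then (-1 : ℤˣ) else 1) * (if B ∈ Uk then (-1 : ℤˣ) else 1)
          * (∏ x ∈ A.1 \ B.1, ∏ y ∈ B.1 \ A.1, Γ.sign x y) := rfl
    have hkey := φ.sign_eq a b hab
    have hsw : (Γ.switch U).sign a b = s a * s b * Γ.sign a b := by rw [hs]; rfl
    rw [hL, hR, hind A, hind B, hABs, hBAs, Finset.prod_singleton, Finset.prod_singleton,
      SignedGraph.prod_mul_prod_sdiff hABs hBAs s, ← hkey, hsw]
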